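/- Let A be a Banach algebra, let I be a closed ideal of A with an approximate identity bounded by C, and let E be a pseudo-unital Banach I-bimodule with the I-action bounded by κ. Then the canonical extended left module action of A on E satisfies ‖a·x‖ ≤ κC‖a‖‖x‖ for all a ∈ A, x ∈ E. -/

import Mathlib

open Filter Topology NormedSpace

/-- Let `A` be a Banach algebra, `I` a closed ideal of `A` with an approximate
identity bounded by `C`, and `E` a pseudo-unital Banach `I`-bimodule whose left `I`-action is
bounded by `κ`.  Then the canonical extended left action `L` of `A` on `E` (characterized by
`a · (b · x) = (ab) · x` for `b ∈ I`) satisfies `‖a · x‖ ≤ κ C ‖a‖ ‖x‖`. -/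
theorem statement2 (A : Type) [NonUnitalNormedRing A] [NormedSpace ℂ A]
    [IsScalarTower ℂ A A] [SMulCommClass ℂ A A] [CompleteSpace A]
    (I : NonUnitalSubalgebra ℂ A) (hclosed : IsClosed (I : Set A))
    (hideal : ∀ a : A, ∀ x ∈ I, a * x ∈ I ∧ x * a ∈ I)
    (C : ℝ)
    -- `I` has an approximate identity bounded by `C`:
    (ι : Type) (F : Filter ι) (e : ι → I) (hne : F.NeBot) (hC : ∀ i, ‖e i‖ ≤ C)
    (happrox : ∀ x : I, Tendsto (fun i => e i * x) F (𝓝 x) ∧ Tendsto (fun i => x * e i) F (𝓝 x))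
    (E : Type) [NormedAddCommGroup E] [NormedSpace ℂ E] [CompleteSpace E]
    -- the Banach `I`-bimodule structure on `E`, with left action bounded by `κ`:
    (li ri : I →L[ℂ] E →L[ℂ] E) (κ : ℝ)
    (hκ : ∀ (x : I) (v : E), ‖li x v‖ ≤ κ * ‖x‖ * ‖v‖)
    (hl : ∀ x y : I, ∀ v, li (x * y) v = li x (li y v))
    (hr : ∀ x y : I, ∀ v, ri (x * y) v = ri y (ri x v))
    (hlr : ∀ x y : I, ∀ v, li x (ri y v) = ri y (li x v))
    -- pseudo-unitality:
    (hpu : ∀ v : E, ∃ (x y : I) (w : E), v = li x (ri y w))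
    -- the canonically extended left action `L` of `A` on `E`:
    (L : A →L[ℂ] E →L[ℂ] E)
    (hL : ∀ a : A, ∀ x : I, ∀ v, L a (li x v) = li ⟨a * (x : A), (hideal a x x.2).1⟩ v) :
    ∀ (a : A) (v : E), ‖L a v‖ ≤ κ * C * (‖a‖ * ‖v‖) := by
  intro a v
  -- The approximate identity acts approximately as identity on all of `E`.
  have key : ∀ u : E, Tendsto (fun i => li (e i) u) F (𝓝 u) := by
    intro u
    obtain ⟨x, y, w, rfl⟩ := hpu u
    set u' : E := ri y w with hu'
    have h1 : ∀ i, li (e i) (li x u') = li (e i * x) u' := fun i => (hl (e i) x u').symm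
    have h2 : Tendsto (fun i => e i * x) F (𝓝 x) := (happrox x).1
    have hcont : Continuous fun z : I => li z u' :=
      ((ContinuousLinearMap.apply ℂ E u').comp li).continuous
    have := (hcont.tendsto x).comp h2
    simpa [Function.comp_def, h1] using this
  have hLtend : Tendsto (fun i => L a (li (e i) v)) F (𝓝 (L a v)) :=
    ((L a).continuous.tendsto v).comp (key v)
  rcases le_or_gt 0 κ with hκ0 | hκ0
  · -- main case
    refine le_of_tendsto (hLtend.norm) ?_
    filter_upwards with i
    rw [hL a (e i) v]
    calc ‖li ⟨a * ((e i : I) : A), (hideal a (e i) (e i).2).1⟩ v‖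
        ≤ κ * ‖(⟨a * ((e i : I) : A), (hideal a (e i) (e i).2).1⟩ : I)‖ * ‖v‖ := hκ _ v
      _ ≤ κ * (‖a‖ * C) * ‖v‖ := by
          have h1 : ‖(⟨a * ((e i : I) : A), (hideal a (e i) (e i).2).1⟩ : I)‖ = ‖a * ((e i : I) : A)‖ := rfl
          have h2 : ‖a * ((e i : I) : A)‖ ≤ ‖a‖ * C := by
            calc ‖a * ((e i : I) : A)‖ ≤ ‖a‖ * ‖((e i : I) : A)‖ := norm_mul_le _ _
              _ ≤ ‖a‖ * C := by
                  have : ‖((e i : I) : A)‖ = ‖e i‖ := rfl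
                  rw [this]; exact mul_le_mul_of_nonneg_left (hC i) (norm_nonneg a)
          rw [h1]
          exact mul_le_mul_of_nonneg_right (mul_le_mul_of_nonneg_left h2 hκ0) (norm_nonneg v)
      _ = κ * C * (‖a‖ * ‖v‖) := by ring
  · -- degenerate case: κ < 0 forces v = 0
    have hv : v = 0 := by
      by_contra hv
      have hvpos : 0 < ‖v‖ := norm_pos_iff.mpr hv
      have he0 : ∀ i, (e i : I) = 0 := by
        intro i
        by_contra hei
        have heipos : 0 < ‖e i‖ := norm_pos_iff.mpr hei
        have := hκ (e i) v
        nlinarith [norm_nonneg (li (e i) v), mul_pos heipos hvpos]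
      obtain ⟨x, y, w, hxyw⟩ := hpu v
      have hx : x = 0 := by
        have h2 : Tendsto (fun i => e i * x) F (𝓝 x) := (happrox x).1
        have : Tendsto (fun _ : ι => (0 : I)) F (𝓝 x) := by
          simpa [he0] using h2
        exact (tendsto_nhds_unique tendsto_const_nhds this).symm
      apply hv
      rw [hxyw, hx]
      simp
    have hC0 : 0 ≤ C := le_trans (norm_nonneg (e (Filter.nonempty_of_neBot F).some)) (hC _)
    subst hv
    simp
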